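/- arXiv:2305.14134 — 3 statements merged into one kernel-verified Lean document; each statement's English description precedes it below -/
import Mathlib

section
/- Suppose u is of class C⁴ on the open set D and satisfies the elastic oscillation equation μ·Δu + (λ+μ)·grad(div u) + Λ·u = 0 at every point of D. Then the scalar function div u satisfies the Helmholtz equation Δ(div u) + ω₁·(div u) = 0 at every point of D, where ω₁ = Λ/(λ+2μ). -/
noncomputable section

/-- Partial derivative of a scalar function on `ℝ³` in the `i`-th coordinate direction. -/
def pd (i : Fin 3) (f : (Fin 3 → ℝ) → ℝ) : (Fin 3 → ℝ) → ℝ :=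
  fun x => fderiv ℝ f x (Pi.single i 1)

/-- Scalar Laplacian on `ℝ³`. -/
def lap (f : (Fin 3 → ℝ) → ℝ) : (Fin 3 → ℝ) → ℝ :=
  fun x => ∑ i : Fin 3, pd i (pd i f) x

/-- Componentwise (vector) Laplacian on `ℝ³`. -/
def vlap (v : (Fin 3 → ℝ) → (Fin 3 → ℝ)) : (Fin 3 → ℝ) → (Fin 3 → ℝ) :=
  fun x j => lap (fun y => v y j) x

/-- Divergence of a vector field on `ℝ³`. -/
def divg (v : (Fin 3 → ℝ) → (Fin 3 → ℝ)) : (Fin 3 → ℝ) → ℝ :=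
  fun x => ∑ i : Fin 3, pd i (fun y => v y i) x

/-- Gradient of a scalar function on `ℝ³`. -/
def grad (f : (Fin 3 → ℝ) → ℝ) : (Fin 3 → ℝ) → (Fin 3 → ℝ) :=
  fun x i => pd i f x

lemma pd_congr {f g : (Fin 3 → ℝ) → ℝ} {x : Fin 3 → ℝ} (i : Fin 3)
    (h : f =ᶠ[nhds x] g) : pd i f x = pd i g x := by
  unfold pd; rw [h.fderiv_eq]

lemma contDiffAt_pd {n m : WithTop ℕ∞} {f : (Fin 3 → ℝ) → ℝ} {x : Fin 3 → ℝ} (i : Fin 3)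
    (h : ContDiffAt ℝ n f x) (hm : m + 1 ≤ n) : ContDiffAt ℝ m (pd i f) x :=
  (h.fderiv_right hm).clm_apply contDiffAt_const

lemma pd_sum {x : Fin 3 → ℝ} (i : Fin 3) (F : Fin 3 → (Fin 3 → ℝ) → ℝ)
    (h : ∀ j, DifferentiableAt ℝ (F j) x) :
    pd i (fun y => ∑ j : Fin 3, F j y) x = ∑ j : Fin 3, pd i (F j) x := by
  unfold pd
  rw [fderiv_fun_sum (fun j _ => h j)]
  simp

lemma pd_comm {f : (Fin 3 → ℝ) → ℝ} {x : Fin 3 → ℝ} (i j : Fin 3)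
    (h : ContDiffAt ℝ 2 f x) : pd i (pd j f) x = pd j (pd i f) x := by
  have hsymm := h.isSymmSndFDerivAt (by simp)
  have hd : DifferentiableAt ℝ (fderiv ℝ f) x :=
    (h.fderiv_right (by norm_num : (1:WithTop ℕ∞) + 1 ≤ 2)).differentiableAt (by norm_num)
  have key : ∀ v w : Fin 3 → ℝ, fderiv ℝ (fun y => fderiv ℝ f y v) x w
      = fderiv ℝ (fderiv ℝ f) x w v := by
    intro v w
    rw [fderiv_clm_apply hd (differentiableAt_const v)]
    simp
  unfold pd
  rw [key, key, hsymm]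

lemma pd_lincomb {x : Fin 3 → ℝ} (j : Fin 3) (a b c : ℝ) (A B C : (Fin 3 → ℝ) → ℝ)
    (hA : DifferentiableAt ℝ A x) (hB : DifferentiableAt ℝ B x)
    (hC : DifferentiableAt ℝ C x) :
    pd j (fun y => a * A y + b * B y + c * C y) x
      = a * pd j A x + b * pd j B x + c * pd j C x := by
  unfold pd
  rw [fderiv_fun_add (f := fun y => a * A y + b * B y) ((hA.const_mul a).add (hB.const_mul b)) (hC.const_mul c),
    fderiv_fun_add (hA.const_mul a) (hB.const_mul b),
    fderiv_const_mul hA a, fderiv_const_mul hB b, fderiv_const_mul hC c]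
  simp

/-- If a `C⁴` vector field `u` satisfies the elastic oscillation equation
`μ Δu + (λ+μ) grad (div u) + Λ u = 0` on an open set `D`, then `div u` satisfies the
Helmholtz equation `Δ(div u) + ω₁ (div u) = 0` on `D`, where `ω₁ = Λ/(λ+2μ)`. -/
theorem div_satisfies_helmholtz
    (μ lam Λ : ℝ) (hμ : 0 < μ) (hlam : 0 < lam + 2 * μ)
    (D : Set (Fin 3 → ℝ)) (hD : IsOpen D)
    (u : (Fin 3 → ℝ) → (Fin 3 → ℝ)) (hu : ContDiffOn ℝ 4 u D)
    (heq : ∀ x ∈ D, ∀ j : Fin 3,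
      μ * vlap u x j + (lam + μ) * grad (divg u) x j + Λ * u x j = 0) :
    ∀ x ∈ D, lap (divg u) x + (Λ / (lam + 2 * μ)) * divg u x = 0 := by
  intro x hx
  have hDx : D ∈ nhds x := hD.mem_nhds hx
  have hf : ∀ (j : Fin 3), ∀ y ∈ D, ContDiffAt ℝ 4 (fun z => u z j) y := by
    intro j y hy
    exact ((ContinuousLinearMap.proj (R := ℝ) (φ := fun _ : Fin 3 => ℝ) j).contDiff.contDiffAt).comp
      y (hu.contDiffAt (hD.mem_nhds hy))
  -- divergence is C³ on D
  have hdivg : ∀ y ∈ D, ContDiffAt ℝ 3 (divg u) y := by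
    intro y hy
    exact ContDiffAt.sum (fun i _ =>
      contDiffAt_pd i (hf i y hy) (by norm_num : (3:WithTop ℕ∞) + 1 ≤ 4))
  -- swapping third derivatives
  have swap3 : ∀ (i j : Fin 3) (g : (Fin 3 → ℝ) → ℝ), (∀ y ∈ D, ContDiffAt ℝ 3 g y) →
      pd j (pd i (pd i g)) x = pd i (pd i (pd j g)) x := by
    intro i j g hg
    have step1 : pd j (pd i (pd i g)) x = pd i (pd j (pd i g)) x :=
      pd_comm j i (contDiffAt_pd i (hg x hx) (by norm_num : (2:WithTop ℕ∞) + 1 ≤ 3))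
    have hev : (pd j (pd i g)) =ᶠ[nhds x] (pd i (pd j g)) :=
      Filter.eventuallyEq_of_mem hDx (fun y hy =>
        pd_comm j i ((hg y hy).of_le (by norm_num : (2:WithTop ℕ∞) ≤ 3)))
    have step2 : pd i (pd j (pd i g)) x = pd i (pd i (pd j g)) x := pd_congr i hev
    rw [step1, step2]
  -- key1 : lap (divg u) x as double sum
  have key1 : lap (divg u) x
      = ∑ i : Fin 3, ∑ j : Fin 3, pd i (pd i (pd j (fun z => u z j))) x := by
    show (∑ i : Fin 3, pd i (pd i (divg u)) x) = _
    refine Finset.sum_congr rfl (fun i _ => ?_)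
    have hev : pd i (divg u) =ᶠ[nhds x]
        (fun y => ∑ j : Fin 3, pd i (pd j (fun z => u z j)) y) :=
      Filter.eventuallyEq_of_mem hDx (fun y hy =>
        pd_sum i _ (fun j => (contDiffAt_pd j (hf j y hy)
          (by norm_num : (3:WithTop ℕ∞) + 1 ≤ 4)).differentiableAt (by norm_num)))
    rw [pd_congr i hev]
    exact pd_sum i _ (fun j => (contDiffAt_pd i (contDiffAt_pd j (hf j x hx)
      (by norm_num : (3:WithTop ℕ∞) + 1 ≤ 4)) (by norm_num : (2:WithTop ℕ∞) + 1 ≤ 3)).differentiableAt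
      (by norm_num))
  -- key3 : divergence of the vector laplacian equals laplacian of divergence
  have key3 : (∑ j : Fin 3, pd j (lap (fun z => u z j)) x) = lap (divg u) x := by
    have : ∀ j : Fin 3, pd j (lap (fun z => u z j)) x
        = ∑ i : Fin 3, pd j (pd i (pd i (fun z => u z j))) x := by
      intro j
      exact pd_sum j _ (fun i => (contDiffAt_pd i (contDiffAt_pd i (hf j x hx)
        (by norm_num : (3:WithTop ℕ∞) + 1 ≤ 4)) (by norm_num : (2:WithTop ℕ∞) + 1 ≤ 3)).differentiableAt
        (by norm_num))
    rw [key1, Finset.sum_comm]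
    refine Finset.sum_congr rfl (fun j _ => ?_)
    rw [this j]
    refine Finset.sum_congr rfl (fun i _ => ?_)
    exact swap3 i j _ (fun y hy => (hf j y hy).of_le (by norm_num : (3:WithTop ℕ∞) ≤ 4))
  -- take the j-th derivative of the j-th equation
  have keyE : ∀ j : Fin 3, μ * pd j (lap (fun z => u z j)) x
      + (lam + μ) * pd j (pd j (divg u)) x + Λ * pd j (fun z => u z j) x = 0 := by
    intro j
    have hA : DifferentiableAt ℝ (lap (fun z => u z j)) x := by
      have : ContDiffAt ℝ 2 (lap (fun z => u z j)) x :=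
        ContDiffAt.sum (fun i _ => contDiffAt_pd i (contDiffAt_pd i (hf j x hx)
          (by norm_num : (3:WithTop ℕ∞) + 1 ≤ 4)) (by norm_num : (2:WithTop ℕ∞) + 1 ≤ 3))
      exact this.differentiableAt (by norm_num)
    have hB : DifferentiableAt ℝ (pd j (divg u)) x :=
      (contDiffAt_pd j (hdivg x hx) (by norm_num : (2:WithTop ℕ∞) + 1 ≤ 3)).differentiableAt
        (by norm_num)
    have hC : DifferentiableAt ℝ (fun z => u z j) x :=
      (hf j x hx).differentiableAt (by norm_num)
    have hev : (fun y => μ * lap (fun z => u z j) y + (lam + μ) * pd j (divg u) y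
        + Λ * u y j) =ᶠ[nhds x] (fun _ => (0:ℝ)) :=
      Filter.eventuallyEq_of_mem hDx (fun y hy => heq y hy j)
    have h0 : pd j (fun _ => (0:ℝ)) x = 0 := by simp [pd]
    have := pd_lincomb j μ (lam + μ) Λ (lap (fun z => u z j)) (pd j (divg u))
      (fun z => u z j) hA hB hC
    rw [← this, pd_congr j hev, h0]
  have hsum := Finset.sum_congr rfl (fun j (_ : j ∈ Finset.univ) => keyE j)
  rw [Finset.sum_const_zero] at hsum
  simp only [Finset.sum_add_distrib, ← Finset.mul_sum] at hsum
  have e1 : (∑ j : Fin 3, pd j (pd j (divg u)) x) = lap (divg u) x := rfl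
  have e2 : (∑ j : Fin 3, pd j (fun z => u z j) x) = divg u x := rfl
  rw [e1, e2, key3] at hsum
  have hne : lam + 2 * μ ≠ 0 := ne_of_gt hlam
  field_simp
  linarith [hsum]
end
end

section
/- (Abelian theorem: two-term eigenvalue counting asymptotics imply two-term heat trace asymptotics.) Let n ≥ 2 be a natural number, let a, b be real numbers, and let τ : ℕ → ℝ be a monotone nondecreasing sequence of nonnegative real numbers tending to +∞. For Λ ∈ ℝ let N(Λ) denote the number of indices k with τ_k < Λ (a finite number). Assume that N(Λ) − a·Λ^{n/2} − b·Λ^{(n−1)/2} = o(Λ^{(n−1)/2}) as Λ → +∞. Then for every t > 0 the series Σ_k exp(−t·τ_k) converges, and Σ_k exp(−t·τ_k) − Γ(1 + n/2)·a·t^{−n/2} − Γ(1 + (n−1)/2)·b·t^{−(n−1)/2} = o(t^{−(n−1)/2}) as t → 0⁺. -/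
open MeasureTheory Real Asymptotics Filter Set Topology

namespace HeatAux

noncomputable def Nf (τ : ℕ → ℝ) (Λ : ℝ) : ℕ := Nat.card {k : ℕ | τ k < Λ}

lemma card_Iio_nat (m : ℕ) : Nat.card (Set.Iio m) = m := by
  rw [Nat.card_eq_fintype_card]; simp

lemma card_Iic_nat (m : ℕ) : Nat.card (Set.Iic m) = m + 1 := by
  rw [Nat.card_eq_fintype_card]; simp

lemma mem_iff_lt_card {S : Set ℕ} (hfin : S.Finite)
    (hlow : ∀ ⦃j k : ℕ⦄, j ≤ k → k ∈ S → j ∈ S) (k : ℕ) :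
    k ∈ S ↔ k < Nat.card S := by
  constructor
  · intro hk
    have hsub : Set.Iic k ⊆ S := fun j hj => hlow hj hk
    have h1 := Nat.card_mono hfin hsub
    rw [card_Iic_nat] at h1
    omega
  · intro hk
    by_contra hkS
    have hsub : S ⊆ Set.Iio k := fun j hj => by
      rcases lt_or_ge j k with h | h
      · exact h
      · exact absurd (hlow h hj) hkS
    have h1 := Nat.card_mono (Set.finite_Iio k) hsub
    rw [card_Iio_nat] at h1
    omega

lemma setOf_finite (τ : ℕ → ℝ) (htop : Tendsto τ atTop atTop) (Λ : ℝ) :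
    {k : ℕ | τ k < Λ}.Finite := by
  obtain ⟨m, hm⟩ := eventually_atTop.mp (htop.eventually_ge_atTop Λ)
  apply Set.Finite.subset (Set.finite_Iio m)
  intro j hj
  simp only [Set.mem_setOf_eq] at hj
  by_contra h
  simp only [Set.mem_Iio, not_lt] at h
  exact absurd (hm j h) (not_le.mpr hj)

lemma lt_iff (τ : ℕ → ℝ) (hmono : Monotone τ) (htop : Tendsto τ atTop atTop)
    (Λ : ℝ) (k : ℕ) : τ k < Λ ↔ k < Nf τ Λ :=
  mem_iff_lt_card (setOf_finite τ htop Λ)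
    (fun _ _ hjk hk => lt_of_le_of_lt (hmono hjk) hk) k

lemma Nf_mono (τ : ℕ → ℝ) (htop : Tendsto τ atTop atTop) : Monotone (Nf τ) :=
  fun _ _ h => Nat.card_mono (setOf_finite τ htop _)
    (fun _ hk => lt_of_lt_of_le hk h)

lemma Nf_measurable (τ : ℕ → ℝ) (htop : Tendsto τ atTop atTop) :
    Measurable fun lam : ℝ => ((Nf τ lam : ℝ)) :=
  Monotone.measurable (fun _ _ hxy => Nat.cast_le.mpr (Nf_mono τ htop hxy))

lemma integral_texp (t c : ℝ) (ht : 0 < t) :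
    ∫ lam in Ioi c, t * Real.exp (-(t * lam)) = Real.exp (-(t * c)) := by
  have hderiv : ∀ x ∈ Ioi c,
      HasDerivAt (fun x => -Real.exp (-(t * x))) (t * Real.exp (-(t * x))) x := by
    intro x _
    have h1 : HasDerivAt (fun x : ℝ => -(t * x)) (-t) x := by
      simpa using ((hasDerivAt_id x).const_mul (-t))
    have h2 := (Real.hasDerivAt_exp (-(t * x))).comp x h1
    have h3 := h2.neg
    rw [show t * Real.exp (-(t * x)) = -(Real.exp (-(t * x)) * -t) by ring]
    exact h3
  have hint : IntegrableOn (fun x => t * Real.exp (-(t * x))) (Ioi c) := by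
    have := (exp_neg_integrableOn_Ioi c ht).const_mul t
    simp only [neg_mul] at this
    exact this
  have htend : Tendsto (fun x => -Real.exp (-(t * x))) atTop (𝓝 0) := by
    rw [← neg_zero]
    apply Filter.Tendsto.neg
    apply Real.tendsto_exp_atBot.comp
    exact tendsto_neg_atTop_atBot.comp (Tendsto.const_mul_atTop ht tendsto_id)
  have hcont : ContinuousWithinAt (fun x => -Real.exp (-(t * x))) (Ici c) c :=
    ((Real.continuous_exp.comp (continuous_const.mul continuous_id).neg).neg).continuousWithinAt
  have h := integral_Ioi_of_hasDerivAt_of_tendsto hcont hderiv hint htend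
  rw [h]
  ring


lemma continuous_rpow_const {q : ℝ} (hq : 0 ≤ q) : Continuous fun x : ℝ => x ^ q :=
  continuous_iff_continuousAt.mpr fun x => Real.continuousAt_rpow_const x q (Or.inr hq)

lemma integrableOn_rpow_exp (s t : ℝ) (hs : 0 < s) (ht : 0 < t) :
    IntegrableOn (fun lam : ℝ => lam ^ s * Real.exp (-(t * lam))) (Ioi 0) := by
  apply integrable_of_isBigO_exp_neg (half_pos ht) (a := 0)
  · apply ContinuousOn.mul
    · intro x _
      exact (Real.continuousAt_rpow_const x s (Or.inr hs.le)).continuousWithinAt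
    · exact (Real.continuous_exp.comp (continuous_const.mul continuous_id).neg).continuousOn
  · have h := tendsto_rpow_mul_exp_neg_mul_atTop_nhds_zero s (t/2) (half_pos ht)
    have h1 : (fun x : ℝ => x ^ s * Real.exp (-(t/2) * x)) =O[atTop] fun _ : ℝ => (1:ℝ) :=
      h.isBigO_one ℝ
    have h2 := h1.mul (isBigO_refl (fun x : ℝ => Real.exp (-(t/2) * x)) atTop)
    have heq : ∀ x : ℝ, (x ^ s * Real.exp (-(t/2) * x)) * Real.exp (-(t/2) * x)
        = x ^ s * Real.exp (-(t * x)) := by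
      intro x
      rw [mul_assoc, ← Real.exp_add]
      congr 2
      ring
    exact h2.congr heq (fun x => one_mul _)

lemma integral_rpow_texp (s t : ℝ) (hs : 0 ≤ s) (ht : 0 < t) :
    ∫ lam in Ioi 0, lam ^ s * (t * Real.exp (-(t * lam)))
      = Real.Gamma (1 + s) * t ^ (-s) := by
  have h := Real.integral_rpow_mul_exp_neg_mul_Ioi (a := s + 1) (r := t) (by linarith) ht
  have h2 : ∫ lam in Ioi 0, lam ^ s * (t * Real.exp (-(t * lam)))
      = t * ∫ x in Ioi 0, x ^ ((s + 1) - 1) * Real.exp (-(t * x)) := by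
    rw [← integral_const_mul]
    apply setIntegral_congr_fun measurableSet_Ioi
    intro x _
    simp only [add_sub_cancel_right]
    ring
  rw [h2, h, one_div, Real.inv_rpow ht.le, ← Real.rpow_neg ht.le]
  have h3 : t * t ^ (-(s + 1)) = t ^ (-s) := by
    have h4 := Real.rpow_add ht 1 (-(s + 1))
    rw [Real.rpow_one] at h4
    rw [← h4]
    norm_num
  rw [← mul_assoc, h3, add_comm s 1, mul_comm]

lemma integrableOn_rpow_texp (s t : ℝ) (hs : 0 < s) (ht : 0 < t) :
    IntegrableOn (fun lam : ℝ => lam ^ s * (t * Real.exp (-(t * lam)))) (Ioi 0) := by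
  have h : IntegrableOn (fun lam : ℝ => t * (lam ^ s * Real.exp (-(t * lam)))) (Ioi 0) :=
    (integrableOn_rpow_exp s t hs ht).const_mul t
  apply h.congr_fun ?_ measurableSet_Ioi
  intro x _
  ring


lemma G_integrable (τ : ℕ → ℝ) (htop : Tendsto τ atTop atTop)
    {s C Λ₁ : ℝ} (hs : 0 < s) (hΛ₁ : 1 ≤ Λ₁)
    (hC : ∀ lam, Λ₁ ≤ lam → (Nf τ lam : ℝ) ≤ C * lam ^ s)
    {t : ℝ} (ht : 0 < t) :
    IntegrableOn (fun lam => ((Nf τ lam : ℝ)) * (t * Real.exp (-(t * lam)))) (Ioi 0) := by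
  have h0Λ : (0:ℝ) < Λ₁ := lt_of_lt_of_le one_pos hΛ₁
  have hGm : Measurable fun lam : ℝ => ((Nf τ lam : ℝ)) * (t * Real.exp (-(t * lam))) :=
    (Nf_measurable τ htop).mul
      (continuous_const.mul (Real.continuous_exp.comp (continuous_const.mul continuous_id).neg)).measurable
  have hGnn : ∀ lam : ℝ, 0 ≤ (Nf τ lam : ℝ) * (t * Real.exp (-(t * lam))) := fun lam =>
    mul_nonneg (Nat.cast_nonneg _) (mul_nonneg ht.le (Real.exp_pos _).le)
  rw [← Set.Ioc_union_Ioi_eq_Ioi h0Λ.le]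
  apply IntegrableOn.union
  · apply Measure.integrableOn_of_bounded (M := (Nf τ Λ₁ : ℝ) * t)
    · exact (measure_Ioc_lt_top).ne
    · exact hGm.aestronglyMeasurable
    · filter_upwards [ae_restrict_mem measurableSet_Ioc] with lam hlam
      rw [Real.norm_eq_abs, abs_of_nonneg (hGnn lam)]
      have h1 : (Nf τ lam : ℝ) ≤ (Nf τ Λ₁ : ℝ) := Nat.cast_le.mpr (Nf_mono τ htop hlam.2)
      have h2 : t * Real.exp (-(t * lam)) ≤ t * 1 := by
        apply mul_le_mul_of_nonneg_left _ ht.le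
        rw [Real.exp_le_one_iff]
        have : 0 ≤ t * lam := mul_nonneg ht.le hlam.1.le
        linarith
      calc (Nf τ lam : ℝ) * (t * Real.exp (-(t * lam)))
          ≤ (Nf τ Λ₁ : ℝ) * (t * 1) := by
            apply mul_le_mul h1 h2 (mul_nonneg ht.le (Real.exp_pos _).le) (Nat.cast_nonneg _)
        _ = (Nf τ Λ₁ : ℝ) * t := by ring
  · have hint : IntegrableOn (fun lam : ℝ => (t * C) * (lam ^ s * Real.exp (-(t * lam)))) (Ioi Λ₁) :=
      ((integrableOn_rpow_exp s t hs ht).mono_set (Ioi_subset_Ioi h0Λ.le)).const_mul (t * C)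
    apply Integrable.mono hint hGm.aestronglyMeasurable.restrict
    filter_upwards [ae_restrict_mem measurableSet_Ioi] with lam hlam
    rw [Real.norm_eq_abs, abs_of_nonneg (hGnn lam)]
    have h1 : (Nf τ lam : ℝ) ≤ C * lam ^ s := hC lam (le_of_lt hlam)
    have h2 : 0 ≤ t * Real.exp (-(t * lam)) := mul_nonneg ht.le (Real.exp_pos _).le
    calc (Nf τ lam : ℝ) * (t * Real.exp (-(t * lam)))
        ≤ (C * lam ^ s) * (t * Real.exp (-(t * lam))) := mul_le_mul_of_nonneg_right h1 h2
      _ = (t * C) * (lam ^ s * Real.exp (-(t * lam))) := by ring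
      _ ≤ ‖(t * C) * (lam ^ s * Real.exp (-(t * lam)))‖ := le_abs_self _

lemma heat_key (τ : ℕ → ℝ) (hmono : Monotone τ) (hpos : ∀ k, 0 ≤ τ k)
    (htop : Tendsto τ atTop atTop) (t : ℝ) (ht : 0 < t)
    (hint : IntegrableOn (fun lam => ((Nf τ lam : ℝ)) * (t * Real.exp (-(t * lam)))) (Ioi 0)) :
    Summable (fun k : ℕ => Real.exp (-(t * τ k))) ∧
    ∑' k : ℕ, Real.exp (-(t * τ k))
      = ∫ lam in Ioi 0, ((Nf τ lam : ℝ)) * (t * Real.exp (-(t * lam))) := by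
  have hGnn : ∀ lam : ℝ, 0 ≤ (Nf τ lam : ℝ) * (t * Real.exp (-(t * lam))) := fun lam =>
    mul_nonneg (Nat.cast_nonneg _) (mul_nonneg ht.le (Real.exp_pos _).le)
  set g : ℕ → ℝ → ENNReal := fun k =>
    (Set.Ioi (τ k)).indicator (fun lam => ENNReal.ofReal (t * Real.exp (-(t * lam)))) with hg
  have hmeas : Measurable fun lam : ℝ => ENNReal.ofReal (t * Real.exp (-(t * lam))) :=
    (continuous_const.mul (Real.continuous_exp.comp (continuous_const.mul continuous_id).neg)).measurable.ennreal_ofReal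
  have hgk : ∀ k, ∫⁻ lam in Ioi (0:ℝ), g k lam = ENNReal.ofReal (Real.exp (-(t * τ k))) := by
    intro k
    rw [hg]
    simp only []
    rw [lintegral_indicator measurableSet_Ioi, Measure.restrict_restrict measurableSet_Ioi,
      Set.inter_eq_self_of_subset_left (Set.Ioi_subset_Ioi (hpos k)),
      ← ofReal_integral_eq_lintegral_ofReal]
    · rw [integral_texp t (τ k) ht]
    · have := (exp_neg_integrableOn_Ioi (τ k) ht).const_mul t
      simpa [neg_mul] using this
    · exact Eventually.of_forall (fun lam => mul_nonneg ht.le (Real.exp_pos _).le)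
  have hpt : ∀ lam : ℝ, ∑' k, g k lam
      = (Nf τ lam : ENNReal) * ENNReal.ofReal (t * Real.exp (-(t * lam))) := by
    intro lam
    have hiff : ∀ k, (τ k < lam) ↔ k < Nf τ lam := fun k => lt_iff τ hmono htop lam k
    calc ∑' k, g k lam
        = ∑' k, (if k < Nf τ lam then ENNReal.ofReal (t * Real.exp (-(t * lam))) else 0) := by
          apply tsum_congr; intro k
          rw [hg]
          simp only [Set.indicator_apply, Set.mem_Ioi]
          rw [if_congr (hiff k) rfl rfl]
      _ = ∑ k ∈ Finset.range (Nf τ lam),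
            (if k < Nf τ lam then ENNReal.ofReal (t * Real.exp (-(t * lam))) else 0) := by
          apply tsum_eq_sum
          intro k hk
          rw [if_neg]
          simpa using hk
      _ = (Nf τ lam : ENNReal) * ENNReal.ofReal (t * Real.exp (-(t * lam))) := by
          rw [Finset.sum_ite_of_true (fun k hk => Finset.mem_range.mp hk)]
          simp [Finset.sum_const, nsmul_eq_mul]
  have htot : ∑' k, ENNReal.ofReal (Real.exp (-(t * τ k)))
      = ENNReal.ofReal (∫ lam in Ioi 0, ((Nf τ lam : ℝ)) * (t * Real.exp (-(t * lam)))) := by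
    calc ∑' k, ENNReal.ofReal (Real.exp (-(t * τ k)))
        = ∑' k, ∫⁻ lam in Ioi (0:ℝ), g k lam := by
          exact (tsum_congr hgk).symm
      _ = ∫⁻ lam in Ioi (0:ℝ), ∑' k, g k lam := by
          rw [lintegral_tsum (fun k => ((hmeas.indicator measurableSet_Ioi)).aemeasurable)]
      _ = ∫⁻ lam in Ioi (0:ℝ), (Nf τ lam : ENNReal) * ENNReal.ofReal (t * Real.exp (-(t * lam))) :=
          lintegral_congr hpt
      _ = ENNReal.ofReal (∫ lam in Ioi 0, ((Nf τ lam : ℝ)) * (t * Real.exp (-(t * lam)))) := by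
          rw [ofReal_integral_eq_lintegral_ofReal hint (Eventually.of_forall hGnn)]
          apply lintegral_congr
          intro lam
          rw [ENNReal.ofReal_mul (Nat.cast_nonneg _), ENNReal.ofReal_natCast]
  have hne : ∑' k, ENNReal.ofReal (Real.exp (-(t * τ k))) ≠ ⊤ := by
    rw [htot]; exact ENNReal.ofReal_ne_top
  have hsummable : Summable fun k : ℕ => Real.exp (-(t * τ k)) := by
    have := ENNReal.summable_toReal hne
    simpa [ENNReal.toReal_ofReal (Real.exp_pos _).le] using this
  refine ⟨hsummable, ?_⟩
  have h1 : ∑' k : ℕ, Real.exp (-(t * τ k))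
      = (∑' k, ENNReal.ofReal (Real.exp (-(t * τ k)))).toReal := by
    rw [ENNReal.tsum_toReal_eq (fun k => ENNReal.ofReal_ne_top)]
    apply tsum_congr
    intro k
    rw [ENNReal.toReal_ofReal (Real.exp_pos _).le]
  rw [h1, htot, ENNReal.toReal_ofReal (setIntegral_nonneg measurableSet_Ioi (fun x _ => hGnn x))]

end HeatAux

open HeatAux in


/-- Abelian theorem: a two-term asymptotic expansion of the eigenvalue counting function
`N(Λ) = #{k : τ_k < Λ}` of the form `N(Λ) = aΛ^{n/2} + bΛ^{(n-1)/2} + o(Λ^{(n-1)/2})`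
implies the two-term heat trace expansion
`∑_k e^{-tτ_k} = Γ(1+n/2) a t^{-n/2} + Γ(1+(n-1)/2) b t^{-(n-1)/2} + o(t^{-(n-1)/2})`
as `t → 0⁺`. -/
theorem counting_asymptotics_imply_heat_trace_asymptotics
    (n : ℕ) (hn : 2 ≤ n) (a b : ℝ) (τ : ℕ → ℝ)
    (hmono : Monotone τ) (hpos : ∀ k, 0 ≤ τ k)
    (htop : Filter.Tendsto τ Filter.atTop Filter.atTop)
    (hN : (fun Λ : ℝ =>
        ((Nat.card {k : ℕ | τ k < Λ} : ℝ) - a * Λ ^ ((n : ℝ) / 2)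
          - b * Λ ^ (((n : ℝ) - 1) / 2)))
      =o[Filter.atTop] (fun Λ : ℝ => Λ ^ (((n : ℝ) - 1) / 2))) :
    (∀ t : ℝ, 0 < t → Summable (fun k : ℕ => Real.exp (-(t * τ k)))) ∧
    (fun t : ℝ =>
        (∑' k : ℕ, Real.exp (-(t * τ k)))
          - Real.Gamma (1 + (n : ℝ) / 2) * a * t ^ (-(n : ℝ) / 2)
          - Real.Gamma (1 + ((n : ℝ) - 1) / 2) * b * t ^ (-((n : ℝ) - 1) / 2))
      =o[nhdsWithin 0 (Set.Ioi (0 : ℝ))]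
        (fun t : ℝ => t ^ (-((n : ℝ) - 1) / 2)) := by
  classical
  have hn2 : (2:ℝ) ≤ (n:ℝ) := by exact_mod_cast hn
  simp only [neg_div]
  set s1 : ℝ := (n:ℝ)/2 with hs1def
  set s2 : ℝ := ((n:ℝ)-1)/2 with hs2def
  have hs1pos : 0 < s1 := by rw [hs1def]; linarith
  have hs2pos : 0 < s2 := by rw [hs2def]; linarith
  have hs21 : s2 ≤ s1 := by rw [hs1def, hs2def]; linarith
  have hN' : (fun Λ : ℝ => ((HeatAux.Nf τ Λ : ℝ) - a * Λ ^ s1 - b * Λ ^ s2)) =o[atTop]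
      (fun Λ : ℝ => Λ ^ s2) := hN
  have htexp : ∀ t : ℝ, 0 < t → ∀ lam : ℝ, 0 ≤ t * Real.exp (-(t * lam)) :=
    fun t ht lam => mul_nonneg ht.le (Real.exp_pos _).le
  -- big-O bound on the counting function
  have h12 : (fun Λ : ℝ => Λ ^ s2) =O[atTop] fun Λ : ℝ => Λ ^ s1 := by
    rw [isBigO_iff]
    refine ⟨1, ?_⟩
    filter_upwards [eventually_ge_atTop (1:ℝ)] with Λ hΛ
    have h0 : (0:ℝ) < Λ := lt_of_lt_of_le one_pos hΛ
    rw [Real.norm_eq_abs, Real.norm_eq_abs, abs_of_nonneg (Real.rpow_nonneg h0.le _),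
      abs_of_nonneg (Real.rpow_nonneg h0.le _), one_mul]
    exact Real.rpow_le_rpow_of_exponent_le hΛ hs21
  have hNO : (fun Λ : ℝ => (HeatAux.Nf τ Λ : ℝ)) =O[atTop] fun Λ : ℝ => Λ ^ s1 := by
    have e1 : (fun Λ : ℝ => (HeatAux.Nf τ Λ : ℝ))
        = fun Λ => ((HeatAux.Nf τ Λ : ℝ) - a * Λ ^ s1 - b * Λ ^ s2)
            + a * Λ ^ s1 + b * Λ ^ s2 := by
      funext Λ; ring
    rw [e1]
    exact ((hN'.isBigO.trans h12).add
      ((isBigO_refl (fun Λ : ℝ => Λ ^ s1) atTop).const_mul_left a)).add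
      (h12.const_mul_left b)
  obtain ⟨C, hCev⟩ := hNO.bound
  obtain ⟨Λ₁', hΛ₁'⟩ := eventually_atTop.mp hCev
  have hΛ₁1 : (1:ℝ) ≤ max Λ₁' 1 := le_max_right _ _
  have hCbound : ∀ lam, max Λ₁' 1 ≤ lam → (HeatAux.Nf τ lam : ℝ) ≤ C * lam ^ s1 := by
    intro lam hlam
    have h := hΛ₁' lam (le_trans (le_max_left _ _) hlam)
    have h0 : (0:ℝ) < lam := lt_of_lt_of_le one_pos (le_trans hΛ₁1 hlam)
    rwa [Real.norm_eq_abs, Real.norm_eq_abs, abs_of_nonneg (Nat.cast_nonneg _),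
      abs_of_nonneg (Real.rpow_nonneg h0.le _)] at h
  have hint : ∀ t : ℝ, 0 < t →
      IntegrableOn (fun lam => ((HeatAux.Nf τ lam : ℝ)) * (t * Real.exp (-(t * lam)))) (Ioi 0) :=
    fun t ht => HeatAux.G_integrable τ htop hs1pos hΛ₁1 hCbound ht
  constructor
  · exact fun t ht => (HeatAux.heat_key τ hmono hpos htop t ht (hint t ht)).1
  · rw [isLittleO_iff]
    intro ε hε
    have hΓ2 : 0 < Real.Gamma (1 + s2) := Real.Gamma_pos_of_pos (by linarith)
    set ε' : ℝ := ε / (2 * Real.Gamma (1 + s2)) with hε'def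
    have hε'pos : 0 < ε' := div_pos hε (by positivity)
    obtain ⟨Λ₀', hΛ₀'⟩ := eventually_atTop.mp (hN'.def hε'pos)
    set Λ₀ : ℝ := max Λ₀' 1 with hΛ₀def
    have hΛ₀1 : (1:ℝ) ≤ Λ₀ := le_max_right _ _
    have hΛ₀0 : (0:ℝ) < Λ₀ := lt_of_lt_of_le one_pos hΛ₀1
    set M : ℝ := (HeatAux.Nf τ Λ₀ : ℝ) + |a| * Λ₀ ^ s1 + |b| * Λ₀ ^ s2 with hMdef
    have hM0 : 0 ≤ M := by
      rw [hMdef]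
      have := Real.rpow_nonneg hΛ₀0.le s1
      have := Real.rpow_nonneg hΛ₀0.le s2
      positivity
    have htend : Tendsto (fun t : ℝ => M * Λ₀ * t ^ (1 + s2)) (𝓝[>] (0:ℝ)) (𝓝 0) := by
      have hc : ContinuousWithinAt (fun u : ℝ => u ^ (1 + s2)) (Set.Ioi 0) 0 :=
        (Real.continuousAt_rpow_const 0 (1 + s2) (Or.inr (by linarith))).continuousWithinAt
      have h00 : (0:ℝ) ^ (1 + s2) = 0 :=
        Real.zero_rpow (by linarith : (0:ℝ) < 1 + s2).ne'
      have h0 : Tendsto (fun u : ℝ => u ^ (1 + s2)) (𝓝[>] (0:ℝ)) (𝓝 (0:ℝ)) := by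
        have := hc
        rw [ContinuousWithinAt, h00] at this
        exact this
      have := h0.const_mul (M * Λ₀)
      simpa using this
    have hev1 : ∀ᶠ t in 𝓝[>] (0:ℝ), M * Λ₀ * t ^ (1 + s2) < ε / 2 :=
      htend.eventually_lt_const (by linarith)
    filter_upwards [hev1, self_mem_nhdsWithin] with t ht1 htpos
    simp only [Set.mem_Ioi] at htpos
    have ht : 0 < t := htpos
    have hintG := hint t ht
    have hint1 : IntegrableOn (fun lam : ℝ => lam ^ s1 * (t * Real.exp (-(t * lam)))) (Ioi 0) :=
      HeatAux.integrableOn_rpow_texp s1 t hs1pos ht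
    have hint2 : IntegrableOn (fun lam : ℝ => lam ^ s2 * (t * Real.exp (-(t * lam)))) (Ioi 0) :=
      HeatAux.integrableOn_rpow_texp s2 t hs2pos ht
    have hinta : IntegrableOn
        (fun lam : ℝ => (a * lam ^ s1) * (t * Real.exp (-(t * lam)))) (Ioi 0) := by
      have h : IntegrableOn
          (fun lam : ℝ => a * (lam ^ s1 * (t * Real.exp (-(t * lam))))) (Ioi 0) :=
        hint1.const_mul a
      apply h.congr_fun ?_ measurableSet_Ioi
      intro x _; ring
    have hintb : IntegrableOn
        (fun lam : ℝ => (b * lam ^ s2) * (t * Real.exp (-(t * lam)))) (Ioi 0) := by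
      have h : IntegrableOn
          (fun lam : ℝ => b * (lam ^ s2 * (t * Real.exp (-(t * lam))))) (Ioi 0) :=
        hint2.const_mul b
      apply h.congr_fun ?_ measurableSet_Ioi
      intro x _; ring
    have hkey := (HeatAux.heat_key τ hmono hpos htop t ht hintG).2
    have hv1 : ∫ lam in Ioi 0, (a * lam ^ s1) * (t * Real.exp (-(t * lam)))
        = Real.Gamma (1 + s1) * a * t ^ (-s1) := by
      calc ∫ lam in Ioi 0, (a * lam ^ s1) * (t * Real.exp (-(t * lam)))
          = ∫ lam in Ioi 0, a * (lam ^ s1 * (t * Real.exp (-(t * lam)))) := by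
            apply setIntegral_congr_fun measurableSet_Ioi; intro x _; ring
        _ = a * ∫ lam in Ioi 0, lam ^ s1 * (t * Real.exp (-(t * lam))) := integral_const_mul a _
        _ = Real.Gamma (1 + s1) * a * t ^ (-s1) := by
            rw [HeatAux.integral_rpow_texp s1 t hs1pos.le ht]; ring
    have hv2 : ∫ lam in Ioi 0, (b * lam ^ s2) * (t * Real.exp (-(t * lam)))
        = Real.Gamma (1 + s2) * b * t ^ (-s2) := by
      calc ∫ lam in Ioi 0, (b * lam ^ s2) * (t * Real.exp (-(t * lam)))
          = ∫ lam in Ioi 0, b * (lam ^ s2 * (t * Real.exp (-(t * lam)))) := by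
            apply setIntegral_congr_fun measurableSet_Ioi; intro x _; ring
        _ = b * ∫ lam in Ioi 0, lam ^ s2 * (t * Real.exp (-(t * lam))) := integral_const_mul b _
        _ = Real.Gamma (1 + s2) * b * t ^ (-s2) := by
            rw [HeatAux.integral_rpow_texp s2 t hs2pos.le ht]; ring
    have hD : (∑' k : ℕ, Real.exp (-(t * τ k))) - Real.Gamma (1 + s1) * a * t ^ (-s1)
        - Real.Gamma (1 + s2) * b * t ^ (-s2)
        = ∫ lam in Ioi 0,
            ((HeatAux.Nf τ lam : ℝ) - a * lam ^ s1 - b * lam ^ s2)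
              * (t * Real.exp (-(t * lam))) := by
      have hbeta1 := integral_sub hintG hinta
      have hbeta2 := integral_sub (hintG.sub hinta) hintb
      simp only [Pi.sub_apply] at hbeta1 hbeta2
      rw [hkey, ← hv1, ← hv2, ← hbeta1, ← hbeta2]
      apply setIntegral_congr_fun measurableSet_Ioi; intro x _; ring
    have hintR : IntegrableOn
        (fun lam => ((HeatAux.Nf τ lam : ℝ) - a * lam ^ s1 - b * lam ^ s2)
          * (t * Real.exp (-(t * lam)))) (Ioi 0) := by
      have h : IntegrableOn (fun lam : ℝ =>
          (HeatAux.Nf τ lam : ℝ) * (t * Real.exp (-(t * lam)))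
            - (a * lam ^ s1) * (t * Real.exp (-(t * lam)))
            - (b * lam ^ s2) * (t * Real.exp (-(t * lam)))) (Ioi 0) :=
        (hintG.sub hinta).sub hintb
      apply h.congr_fun ?_ measurableSet_Ioi
      intro x _; ring
    have hsplit : (∫ lam in Ioi 0,
          ((HeatAux.Nf τ lam : ℝ) - a * lam ^ s1 - b * lam ^ s2)
            * (t * Real.exp (-(t * lam))))
        = (∫ lam in Ioc 0 Λ₀,
            ((HeatAux.Nf τ lam : ℝ) - a * lam ^ s1 - b * lam ^ s2)
              * (t * Real.exp (-(t * lam))))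
          + ∫ lam in Ioi Λ₀,
            ((HeatAux.Nf τ lam : ℝ) - a * lam ^ s1 - b * lam ^ s2)
              * (t * Real.exp (-(t * lam))) := by
      rw [← setIntegral_union (Set.Ioc_disjoint_Ioi le_rfl) measurableSet_Ioi
        (hintR.mono_set Set.Ioc_subset_Ioi_self)
        (hintR.mono_set (Set.Ioi_subset_Ioi hΛ₀0.le)),
        Set.Ioc_union_Ioi_eq_Ioi hΛ₀0.le]
    have hb1 : ‖∫ lam in Ioc 0 Λ₀,
          ((HeatAux.Nf τ lam : ℝ) - a * lam ^ s1 - b * lam ^ s2)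
            * (t * Real.exp (-(t * lam)))‖ ≤ (M * t) * Λ₀ := by
      have h := norm_setIntegral_le_of_norm_le_const (μ := volume) (s := Ioc 0 Λ₀)
        (f := fun lam : ℝ => ((HeatAux.Nf τ lam : ℝ) - a * lam ^ s1 - b * lam ^ s2)
          * (t * Real.exp (-(t * lam)))) (C := M * t) measure_Ioc_lt_top ?_
      · calc ‖∫ lam in Ioc 0 Λ₀,
              ((HeatAux.Nf τ lam : ℝ) - a * lam ^ s1 - b * lam ^ s2)
                * (t * Real.exp (-(t * lam)))‖
            ≤ (M * t) * (volume (Ioc (0:ℝ) Λ₀)).toReal := h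
          _ = (M * t) * Λ₀ := by
              rw [Real.volume_Ioc, ENNReal.toReal_ofReal (by linarith)]
              ring
      · intro x hx
        have hx0 : 0 < x := hx.1
        have hNx : (HeatAux.Nf τ x : ℝ) ≤ (HeatAux.Nf τ Λ₀ : ℝ) :=
          Nat.cast_le.mpr (HeatAux.Nf_mono τ htop hx.2)
        have hx1 : x ^ s1 ≤ Λ₀ ^ s1 := Real.rpow_le_rpow hx0.le hx.2 hs1pos.le
        have hx2 : x ^ s2 ≤ Λ₀ ^ s2 := Real.rpow_le_rpow hx0.le hx.2 hs2pos.le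
        have hx1' : 0 ≤ x ^ s1 := Real.rpow_nonneg hx0.le _
        have hx2' : 0 ≤ x ^ s2 := Real.rpow_nonneg hx0.le _
        have ha1 : |a * x ^ s1| ≤ |a| * Λ₀ ^ s1 := by
          rw [abs_mul, abs_of_nonneg hx1']
          exact mul_le_mul_of_nonneg_left hx1 (abs_nonneg a)
        have hb2' : |b * x ^ s2| ≤ |b| * Λ₀ ^ s2 := by
          rw [abs_mul, abs_of_nonneg hx2']
          exact mul_le_mul_of_nonneg_left hx2 (abs_nonneg b)
        have hRx : |(HeatAux.Nf τ x : ℝ) - a * x ^ s1 - b * x ^ s2| ≤ M := by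
          rw [abs_le]
          constructor
          · rw [hMdef]
            have h1 := le_abs_self (a * x ^ s1)
            have h2 := le_abs_self (b * x ^ s2)
            have h3 : (0:ℝ) ≤ (HeatAux.Nf τ x : ℝ) := Nat.cast_nonneg _
            linarith
          · rw [hMdef]
            have h1 := neg_abs_le (a * x ^ s1)
            have h2 := neg_abs_le (b * x ^ s2)
            linarith
        calc ‖((HeatAux.Nf τ x : ℝ) - a * x ^ s1 - b * x ^ s2)
                * (t * Real.exp (-(t * x)))‖
            = |(HeatAux.Nf τ x : ℝ) - a * x ^ s1 - b * x ^ s2|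
                * (t * Real.exp (-(t * x))) := by
              rw [norm_mul, Real.norm_eq_abs, Real.norm_eq_abs,
                abs_of_nonneg (htexp t ht x)]
          _ ≤ M * (t * 1) := by
              apply mul_le_mul hRx ?_ (htexp t ht x) hM0
              apply mul_le_mul_of_nonneg_left ?_ ht.le
              rw [Real.exp_le_one_iff]
              nlinarith
          _ = M * t := by ring
    have hb2i : ‖∫ lam in Ioi Λ₀,
          ((HeatAux.Nf τ lam : ℝ) - a * lam ^ s1 - b * lam ^ s2)
            * (t * Real.exp (-(t * lam)))‖
        ≤ ε' * (Real.Gamma (1 + s2) * t ^ (-s2)) := by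
      have hstep1 : (∫ lam in Ioi Λ₀,
            ‖((HeatAux.Nf τ lam : ℝ) - a * lam ^ s1 - b * lam ^ s2)
              * (t * Real.exp (-(t * lam)))‖)
          ≤ ∫ lam in Ioi Λ₀, ε' * (lam ^ s2 * (t * Real.exp (-(t * lam)))) := by
        apply setIntegral_mono_on
          ((hintR.mono_set (Set.Ioi_subset_Ioi hΛ₀0.le)).norm)
          ((hint2.mono_set (Set.Ioi_subset_Ioi hΛ₀0.le)).const_mul ε')
          measurableSet_Ioi
        intro x hx
        have hx0 : (0:ℝ) < x := lt_trans hΛ₀0 hx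
        have h1 : |(HeatAux.Nf τ x : ℝ) - a * x ^ s1 - b * x ^ s2| ≤ ε' * x ^ s2 := by
          have h := hΛ₀' x (le_trans (le_max_left _ _) hx.le)
          rwa [Real.norm_eq_abs, Real.norm_eq_abs,
            abs_of_nonneg (Real.rpow_nonneg hx0.le _)] at h
        calc ‖((HeatAux.Nf τ x : ℝ) - a * x ^ s1 - b * x ^ s2)
                * (t * Real.exp (-(t * x)))‖
            = |(HeatAux.Nf τ x : ℝ) - a * x ^ s1 - b * x ^ s2|
                * (t * Real.exp (-(t * x))) := by
              rw [norm_mul, Real.norm_eq_abs, Real.norm_eq_abs,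
                abs_of_nonneg (htexp t ht x)]
          _ ≤ (ε' * x ^ s2) * (t * Real.exp (-(t * x))) :=
              mul_le_mul_of_nonneg_right h1 (htexp t ht x)
          _ = ε' * (x ^ s2 * (t * Real.exp (-(t * x)))) := by ring
      have hstep2 : (∫ lam in Ioi Λ₀, ε' * (lam ^ s2 * (t * Real.exp (-(t * lam)))))
          ≤ ∫ lam in Ioi 0, ε' * (lam ^ s2 * (t * Real.exp (-(t * lam)))) := by
        apply setIntegral_mono_set (hint2.const_mul ε') ?_
          (HasSubset.Subset.eventuallyLE (Set.Ioi_subset_Ioi hΛ₀0.le))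
        filter_upwards [ae_restrict_mem measurableSet_Ioi] with x hx
        exact mul_nonneg hε'pos.le
          (mul_nonneg (Real.rpow_nonneg (le_of_lt hx) _) (htexp t ht x))
      have hstep3 : (∫ lam in Ioi 0, ε' * (lam ^ s2 * (t * Real.exp (-(t * lam)))))
          = ε' * (Real.Gamma (1 + s2) * t ^ (-s2)) := by
        rw [integral_const_mul, HeatAux.integral_rpow_texp s2 t hs2pos.le ht]
      calc ‖∫ lam in Ioi Λ₀,
            ((HeatAux.Nf τ lam : ℝ) - a * lam ^ s1 - b * lam ^ s2)
              * (t * Real.exp (-(t * lam)))‖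
          ≤ ∫ lam in Ioi Λ₀,
            ‖((HeatAux.Nf τ lam : ℝ) - a * lam ^ s1 - b * lam ^ s2)
              * (t * Real.exp (-(t * lam)))‖ := norm_integral_le_integral_norm _
        _ ≤ ∫ lam in Ioi Λ₀, ε' * (lam ^ s2 * (t * Real.exp (-(t * lam)))) := hstep1
        _ ≤ ∫ lam in Ioi 0, ε' * (lam ^ s2 * (t * Real.exp (-(t * lam)))) := hstep2
        _ = ε' * (Real.Gamma (1 + s2) * t ^ (-s2)) := hstep3
    -- put everything together
    have hts2 : 0 < t ^ (-s2) := Real.rpow_pos_of_pos ht _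
    have h6 : t ^ (1 + s2) * t ^ (-s2) = t := by
      rw [← Real.rpow_add ht]
      norm_num
    have hkey2 : M * Λ₀ * t = (M * Λ₀ * t ^ (1 + s2)) * t ^ (-s2) := by
      rw [mul_assoc (M * Λ₀), h6]
    have htt : M * Λ₀ * t ≤ ε / 2 * t ^ (-s2) := by
      rw [hkey2]
      exact mul_le_mul_of_nonneg_right ht1.le hts2.le
    have hε'Γ : ε' * (Real.Gamma (1 + s2) * t ^ (-s2)) = ε / 2 * t ^ (-s2) := by
      rw [hε'def]
      field_simp
    rw [hD, hsplit]
    calc ‖(∫ lam in Ioc 0 Λ₀,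
            ((HeatAux.Nf τ lam : ℝ) - a * lam ^ s1 - b * lam ^ s2)
              * (t * Real.exp (-(t * lam))))
          + ∫ lam in Ioi Λ₀,
            ((HeatAux.Nf τ lam : ℝ) - a * lam ^ s1 - b * lam ^ s2)
              * (t * Real.exp (-(t * lam)))‖
        ≤ ‖∫ lam in Ioc 0 Λ₀,
            ((HeatAux.Nf τ lam : ℝ) - a * lam ^ s1 - b * lam ^ s2)
              * (t * Real.exp (-(t * lam)))‖
          + ‖∫ lam in Ioi Λ₀,
            ((HeatAux.Nf τ lam : ℝ) - a * lam ^ s1 - b * lam ^ s2)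
              * (t * Real.exp (-(t * lam)))‖ := norm_add_le _ _
      _ ≤ (M * t) * Λ₀ + ε' * (Real.Gamma (1 + s2) * t ^ (-s2)) := add_le_add hb1 hb2i
      _ ≤ ε / 2 * t ^ (-s2) + ε / 2 * t ^ (-s2) := by
          apply add_le_add
          · have he : (M * t) * Λ₀ = M * Λ₀ * t := by ring
            rw [he]; exact htt
          · rw [hε'Γ]
      _ = ε * t ^ (-s2) := by ring
      _ = ε * ‖t ^ (-s2)‖ := by rw [Real.norm_eq_abs, abs_of_pos hts2]
end

section
/- (Reflection intertwines the planar Lamé operator with its reflected operator.) Let μ, λ be real numbers and let u = (u₁, u₂) : ℝ × ℝ → ℝ × ℝ be twice continuously differentiable. Define the operators L v := −μ·Δv − (λ+μ)·(∂ₓ(∂ₓv₁ + ∂ᵧv₂), ∂ᵧ(∂ₓv₁ + ∂ᵧv₂)) and P⋆v := −μ·Δv − (λ+μ)·(∂ₓₓv₁ − ∂ₓᵧv₂, −∂ₓᵧv₁ + ∂ᵧᵧv₂), where Δ is the componentwise Laplacian. Let w(x, y) := u(x, −y). Then for every (x, y) ∈ ℝ × ℝ, (L w)(x, y) = (P⋆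 u)(x, −y). -/
noncomputable section

/-- Partial derivative in the first coordinate direction of a function on `ℝ × ℝ`. -/
def pdx (f : ℝ × ℝ → ℝ) : ℝ × ℝ → ℝ :=
  fun p => fderiv ℝ f p (1, 0)

/-- Partial derivative in the second coordinate direction of a function on `ℝ × ℝ`. -/
def pdy (f : ℝ × ℝ → ℝ) : ℝ × ℝ → ℝ :=
  fun p => fderiv ℝ f p (0, 1)

/-- Scalar Laplacian on `ℝ × ℝ`. -/
def lap2 (f : ℝ × ℝ → ℝ) : ℝ × ℝ → ℝ :=
  fun p => pdx (pdx f) p + pdy (pdy f) p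

/-- The planar Lamé operator `L v = -μ Δv - (λ+μ) grad (div v)`. -/
def LameOp (μ lam : ℝ) (v : ℝ × ℝ → ℝ × ℝ) : ℝ × ℝ → ℝ × ℝ :=
  fun p =>
    (-μ * lap2 (fun q => (v q).1) p -
        (lam + μ) * pdx (fun q => pdx (fun r => (v r).1) q + pdy (fun r => (v r).2) q) p,
      -μ * lap2 (fun q => (v q).2) p -
        (lam + μ) * pdy (fun q => pdx (fun r => (v r).1) q + pdy (fun r => (v r).2) q) p)

/-- The reflected planar Lamé operator
`P⋆ v = -μ Δv - (λ+μ) (∂ₓₓv₁ - ∂ₓᵧv₂, -∂ₓᵧv₁ + ∂ᵧᵧv₂)`. -/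
def LameOpStar (μ lam : ℝ) (v : ℝ × ℝ → ℝ × ℝ) : ℝ × ℝ → ℝ × ℝ :=
  fun p =>
    (-μ * lap2 (fun q => (v q).1) p -
        (lam + μ) * (pdx (pdx (fun r => (v r).1)) p - pdx (pdy (fun r => (v r).2)) p),
      -μ * lap2 (fun q => (v q).2) p -
        (lam + μ) * (-pdx (pdy (fun r => (v r).1)) p + pdy (pdy (fun r => (v r).2)) p))

def Rm : ℝ × ℝ →L[ℝ] ℝ × ℝ :=
  (ContinuousLinearMap.fst ℝ ℝ ℝ).prod (-(ContinuousLinearMap.snd ℝ ℝ ℝ))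

@[simp] lemma Rm_apply (p : ℝ × ℝ) : Rm p = (p.1, -p.2) := rfl

-- derivative of f ∘ Rm
lemma fderiv_comp_Rm (f : ℝ × ℝ → ℝ) (hf : Differentiable ℝ f) (p v : ℝ × ℝ) :
    fderiv ℝ (fun q => f (Rm q)) p v = fderiv ℝ f (Rm p) (Rm v) := by
  have h := fderiv_comp (𝕜 := ℝ) p (hf (Rm p)) (Rm.differentiableAt)
  have : fderiv ℝ (f ∘ Rm) p = (fderiv ℝ f (Rm p)).comp Rm := by
    rw [h, Rm.fderiv]
  have := congrArg (fun L => L v) this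
  simpa [Function.comp_def] using this

lemma pdx_comp_Rm (f : ℝ × ℝ → ℝ) (hf : Differentiable ℝ f) :
    pdx (fun q => f (Rm q)) = fun p => pdx f (Rm p) := by
  funext p
  have := fderiv_comp_Rm f hf p (1, 0)
  simpa [pdx, Prod.ext_iff] using this

lemma pdy_comp_Rm (f : ℝ × ℝ → ℝ) (hf : Differentiable ℝ f) :
    pdy (fun q => f (Rm q)) = fun p => -pdy f (Rm p) := by
  funext p
  have := fderiv_comp_Rm f hf p (0, 1)
  have h2 : Rm ((0:ℝ), (1:ℝ)) = ((0:ℝ), (-1:ℝ)) := rfl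
  rw [h2] at this
  have h3 : ((0:ℝ), (-1:ℝ)) = -((0:ℝ),(1:ℝ)) := by simp [Prod.ext_iff]
  rw [h3, map_neg] at this
  simpa [pdy] using this

lemma pdx_neg (f : ℝ × ℝ → ℝ) : pdx (fun p => -f p) = fun p => -pdx f p := by
  funext p; simp [pdx, fderiv_neg]

lemma pdy_neg (f : ℝ × ℝ → ℝ) : pdy (fun p => -f p) = fun p => -pdy f p := by
  funext p; simp [pdy, fderiv_neg]

lemma diff_pd (f : ℝ × ℝ → ℝ) (hf : ContDiff ℝ 2 f) (v : ℝ × ℝ) :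
    Differentiable ℝ (fun p => fderiv ℝ f p v) := by
  have h1 : ContDiff ℝ 1 (fderiv ℝ f) := hf.fderiv_right (by norm_num)
  exact fun p =>
    ((ContinuousLinearMap.apply ℝ ℝ v).differentiable.comp (h1.differentiable one_ne_zero)) p

lemma diff_pdx (f : ℝ × ℝ → ℝ) (hf : ContDiff ℝ 2 f) : Differentiable ℝ (pdx f) :=
  diff_pd f hf _

lemma diff_pdy (f : ℝ × ℝ → ℝ) (hf : ContDiff ℝ 2 f) : Differentiable ℝ (pdy f) :=
  diff_pd f hf _

lemma fderiv_pd_apply (f : ℝ × ℝ → ℝ) (hf : ContDiff ℝ 2 f) (p v w : ℝ × ℝ) :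
    fderiv ℝ (fun q => fderiv ℝ f q v) p w = fderiv ℝ (fderiv ℝ f) p w v := by
  have h1 : DifferentiableAt ℝ (fderiv ℝ f) p :=
    (hf.fderiv_right (m := 1) (by norm_num)).differentiable one_ne_zero p
  rw [fderiv_clm_apply h1 (differentiableAt_const v)]
  simp

lemma schwarz (f : ℝ × ℝ → ℝ) (hf : ContDiff ℝ 2 f) (p : ℝ × ℝ) :
    pdy (pdx f) p = pdx (pdy f) p := by
  have hs : IsSymmSndFDerivAt ℝ f p :=
    (hf.contDiffAt).isSymmSndFDerivAt (by norm_num)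
  have h1 := fderiv_pd_apply f hf p (1,0) (0,1)
  have h2 := fderiv_pd_apply f hf p (0,1) (1,0)
  show fderiv ℝ (fun q => fderiv ℝ f q (1,0)) p (0,1)
      = fderiv ℝ (fun q => fderiv ℝ f q (0,1)) p (1,0)
  rw [h1, h2, hs.eq]

section Aux2


lemma pdx_sub (f g : ℝ × ℝ → ℝ) (hf : Differentiable ℝ f) (hg : Differentiable ℝ g) (p : ℝ × ℝ) :
    pdx (fun q => f q - g q) p = pdx f p - pdx g p := by
  simp [pdx, fderiv_fun_sub (hf p) (hg p)]

lemma pdy_sub (f g : ℝ × ℝ → ℝ) (hf : Differentiable ℝ f) (hg : Differentiable ℝ g) (p : ℝ × ℝ) :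
    pdy (fun q => f q - g q) p = pdy f p - pdy g p := by
  simp [pdy, fderiv_fun_sub (hf p) (hg p)]

lemma pdxx_comp (f : ℝ × ℝ → ℝ) (hf : ContDiff ℝ 2 f) (p : ℝ × ℝ) :
    pdx (pdx (fun q => f (Rm q))) p = pdx (pdx f) (Rm p) := by
  rw [pdx_comp_Rm f (hf.differentiable two_ne_zero), pdx_comp_Rm (pdx f) (diff_pdx f hf)]

lemma pdyy_comp (f : ℝ × ℝ → ℝ) (hf : ContDiff ℝ 2 f) (p : ℝ × ℝ) :
    pdy (pdy (fun q => f (Rm q))) p = pdy (pdy f) (Rm p) := by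
  rw [pdy_comp_Rm f (hf.differentiable two_ne_zero),
    pdy_neg (fun p => pdy f (Rm p)), pdy_comp_Rm (pdy f) (diff_pdy f hf)]
  simp

lemma lap2_comp (f : ℝ × ℝ → ℝ) (hf : ContDiff ℝ 2 f) (p : ℝ × ℝ) :
    lap2 (fun q => f (Rm q)) p = lap2 f (Rm p) := by
  simp only [lap2]
  rw [pdxx_comp f hf p, pdyy_comp f hf p]

lemma pdx_comp_Rm' (f : ℝ × ℝ → ℝ) (hf : Differentiable ℝ f) (p : ℝ × ℝ) :
    pdx (fun q => f (Rm q)) p = pdx f (Rm p) := by rw [pdx_comp_Rm f hf]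

lemma pdy_comp_Rm' (f : ℝ × ℝ → ℝ) (hf : Differentiable ℝ f) (p : ℝ × ℝ) :
    pdy (fun q => f (Rm q)) p = -pdy f (Rm p) := by rw [pdy_comp_Rm f hf]

end Aux2

/-- Reflection intertwines the planar Lamé operator with its reflected operator:
for `w(x,y) := u(x,-y)`, one has `(L w)(x,y) = (P⋆ u)(x,-y)`. -/
theorem reflection_intertwines_lame
    (μ lam : ℝ) (u : ℝ × ℝ → ℝ × ℝ) (hu : ContDiff ℝ 2 u)
    (w : ℝ × ℝ → ℝ × ℝ) (hw : w = fun p => u (p.1, -p.2)) :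
    ∀ x y : ℝ, LameOp μ lam w (x, y) = LameOpStar μ lam u (x, -y) := by
  subst hw
  intro x y
  set p : ℝ × ℝ := (x, y) with hp
  have hRp : ((x : ℝ), -y) = Rm p := rfl
  have hu1 : ContDiff ℝ 2 (fun q => (u q).1) := hu.fst
  have hu2 : ContDiff ℝ 2 (fun q => (u q).2) := hu.snd
  have hw1 : (fun r => (u (r.1, -r.2)).1) = fun q => (fun r => (u r).1) (Rm q) := rfl
  have hw2 : (fun r => (u (r.1, -r.2)).2) = fun q => (fun r => (u r).2) (Rm q) := rfl
  -- divergence of w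
  have hdiv : (fun q => pdx (fun r => (u (r.1, -r.2)).1) q
        + pdy (fun r => (u (r.1, -r.2)).2) q)
      = fun q => (fun r => pdx (fun s => (u s).1) r - pdy (fun s => (u s).2) r) (Rm q) := by
    funext q
    rw [hw1, hw2, pdx_comp_Rm _ (hu1.differentiable two_ne_zero),
      pdy_comp_Rm _ (hu2.differentiable two_ne_zero)]
    ring
  have hDdiff1 : Differentiable ℝ (pdx fun s => (u s).1) := diff_pdx _ hu1
  have hDdiff2 : Differentiable ℝ (pdy fun s => (u s).2) := diff_pdy _ hu2
  have hDdiff : Differentiable ℝ (fun r => pdx (fun s => (u s).1) r - pdy (fun s => (u s).2) r) :=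
    hDdiff1.sub hDdiff2
  simp only [LameOp, LameOpStar, Prod.mk.injEq]
  constructor
  · rw [hdiv, pdx_comp_Rm' _ hDdiff p, pdx_sub _ _ hDdiff1 hDdiff2,
      hw1, lap2_comp _ hu1 p, hRp]
  · rw [hdiv, pdy_comp_Rm' _ hDdiff p, pdy_sub _ _ hDdiff1 hDdiff2,
      hw2, lap2_comp _ hu2 p, schwarz _ hu1, hRp]
    ring
end
end
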